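/- Let n ≥ 2 and T ≥ 1, and let 𝒢 = (P_n, λ) be the temporal graph on the path P_n with λ(e) = [T] for every edge e of P_n (every edge active at every time slot). Then the 2-temporal line graph L_2(𝒢) is isomorphic to the diagonal grid graph Z^D_{n−1,T}. -/

import Mathlib

variable {V : Type*}

/-- The underlying (static) graph of a temporal graph given by its time-labeling. -/
def ugraph (lab : Sym2 V → Finset ℕ) : SimpleGraph V where
  Adj x y := x ≠ y ∧ (lab s(x, y)).Nonempty
  symm := by
    constructor
    intro x y h
    exact ⟨h.1.symm, by rw [Sym2.eq_swap]; exact h.2⟩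
  loopless := by constructor; intro x h; exact h.1 rfl

/-- `(e, t)` is a time edge of the temporal graph given by `lab`. -/
def IsTimeEdge (lab : Sym2 V → Finset ℕ) (p : Sym2 V × ℕ) : Prop :=
  ¬ p.1.IsDiag ∧ p.2 ∈ lab p.1

/-- Two time edges are Δ-independent: edges disjoint or labels at least Δ apart. -/
def DIndep (Δ : ℕ) (p q : Sym2 V × ℕ) : Prop :=
  (∀ v, v ∈ p.1 → v ∉ q.1) ∨ Δ ≤ ((p.2 : ℤ) - (q.2 : ℤ)).natAbs

/-- A Δ-temporal matching. -/
def IsTM (lab : Sym2 V → Finset ℕ) (Δ : ℕ) (M : Finset (Sym2 V × ℕ)) : Prop :=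
  (∀ p ∈ M, IsTimeEdge lab p) ∧ ∀ p ∈ M, ∀ q ∈ M, p ≠ q → DIndep Δ p q

/-- μ_Δ: maximum cardinality of a Δ-temporal matching. -/
noncomputable def tmu (lab : Sym2 V → Finset ℕ) (Δ : ℕ) : ℕ :=
  sSup {k | ∃ M : Finset (Sym2 V × ℕ), IsTM lab Δ M ∧ M.card = k}

/-- The temporal graph has lifetime `T`. -/
def HasLifetime (lab : Sym2 V → Finset ℕ) (T : ℕ) : Prop :=
  (∀ e, ∀ t ∈ lab e, 1 ≤ t ∧ t ≤ T) ∧ ∃ e : Sym2 V, ¬ e.IsDiag ∧ T ∈ lab e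

/-- The snapshot at time `t`. -/
def tsnapshot (lab : Sym2 V → Finset ℕ) (t : ℕ) : SimpleGraph V where
  Adj x y := x ≠ y ∧ t ∈ lab s(x, y)
  symm := by
    constructor
    intro x y h
    exact ⟨h.1.symm, by rw [Sym2.eq_swap]; exact h.2⟩
  loopless := by constructor; intro x h; exact h.1 rfl

/-- 𝒢|_S : keep only time edges with label in `S`. -/
def trestrict (lab : Sym2 V → Finset ℕ) (S : Finset ℕ) : Sym2 V → Finset ℕ :=
  fun e => lab e ∩ S

/-- A finite matching of a static graph. -/
def IsMatchingF (G : SimpleGraph V) (R : Finset (Sym2 V)) : Prop :=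
  (∀ e ∈ R, e ∈ G.edgeSet) ∧ ∀ e ∈ R, ∀ e' ∈ R, e ≠ e' → ∀ v, v ∈ e → v ∉ e'

/-- ν(G): maximum cardinality of a matching. -/
noncomputable def matchNum (G : SimpleGraph V) : ℕ :=
  sSup {k | ∃ R : Finset (Sym2 V), IsMatchingF G R ∧ R.card = k}

/-- An independent set of a static graph. -/
def IsIndepF (G : SimpleGraph V) (S : Finset V) : Prop :=
  ∀ u ∈ S, ∀ v ∈ S, ¬ G.Adj u v

/-- α(G): maximum cardinality of an independent set. -/
noncomputable def indepNum (G : SimpleGraph V) : ℕ :=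
  sSup {k | ∃ S : Finset V, IsIndepF G S ∧ S.card = k}

/-- The Δ-temporal line graph: vertices are the time edges, two distinct time edges are
adjacent iff the edges share a vertex and the labels are less than Δ apart. -/
def tline (lab : Sym2 V → Finset ℕ) (Δ : ℕ) :
    SimpleGraph {p : Sym2 V × ℕ // IsTimeEdge lab p} where
  Adj p q := p ≠ q ∧ (∃ v, v ∈ p.1.1 ∧ v ∈ q.1.1) ∧ ((p.1.2 : ℤ) - (q.1.2 : ℤ)).natAbs < Δ
  symm := by
    constructor
    rintro p q ⟨hne, ⟨v, hv1, hv2⟩, hlt⟩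
    exact ⟨hne.symm, ⟨v, hv2, hv1⟩, by omega⟩
  loopless := by constructor; rintro p ⟨hne, -⟩; exact hne rfl

/-- The diagonal grid graph (king's graph) `Z^D_{n,m}` on vertex set `Fin n × Fin m`:
`v_{i,j}` and `v_{i',j'}` are adjacent iff they are distinct and
`|i-i'|² + |j-j'|² ≤ 2`. -/
def diagGrid (n m : ℕ) : SimpleGraph (Fin n × Fin m) where
  Adj p q := p ≠ q ∧ ((p.1 : ℤ) - (q.1 : ℤ)) ^ 2 + ((p.2 : ℤ) - (q.2 : ℤ)) ^ 2 ≤ 2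
  symm := by
    constructor
    intro p q h
    refine ⟨h.1.symm, ?_⟩
    have heq : ((q.1 : ℤ) - (p.1 : ℤ)) ^ 2 + ((q.2 : ℤ) - (p.2 : ℤ)) ^ 2
        = ((p.1 : ℤ) - (q.1 : ℤ)) ^ 2 + ((p.2 : ℤ) - (q.2 : ℤ)) ^ 2 := by ring
    rw [heq]; exact h.2
  loopless := by constructor; intro p h; exact h.1 rfl

/- The time-labeling of the temporal graph `(P_n, λ)` with `λ(e) = [T]` for every
edge `e` of the path `P_n`. -/
open Classical in
noncomputable def pathLab (n T : ℕ) : Sym2 (Fin n) → Finset ℕ :=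
  fun e => if e ∈ (SimpleGraph.pathGraph n).edgeSet then Finset.Icc 1 T else ∅

/-- For `n ≥ 2` and `T ≥ 1`, the 2-temporal line graph of the temporal
graph `(P_n, λ)` with `λ(e) = [T]` for every edge is isomorphic to the diagonal grid
graph `Z^D_{n-1,T}`. -/
theorem stmt8 (n T : ℕ) (hn : 2 ≤ n) (hT : 1 ≤ T) :
    Nonempty (tline (pathLab n T) 2 ≃g diagGrid (n - 1) T) := by
  classical
  set g : Fin (n - 1) × Fin T → {p : Sym2 (Fin n) × ℕ // IsTimeEdge (pathLab n T) p} :=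
    fun q => ⟨(s(⟨q.1.1, by omega⟩, ⟨q.1.1 + 1, by omega⟩), q.2.1 + 1), by
      constructor
      · simp [Sym2.isDiag_iff_proj_eq, Fin.ext_iff]
      · have hadj : (SimpleGraph.pathGraph n).Adj ⟨q.1.1, by omega⟩ ⟨q.1.1 + 1, by omega⟩ := by
          rw [SimpleGraph.pathGraph_adj]; left; rfl
        simp only [pathLab]
        rw [if_pos (((SimpleGraph.pathGraph n).mem_edgeSet).mpr hadj)]
        simp [Finset.mem_Icc]⟩ with hg
  have hinj : Function.Injective g := by
    rintro ⟨i, j⟩ ⟨i', j'⟩ h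
    simp only [hg, Subtype.ext_iff, Prod.mk.injEq, Sym2.eq, Sym2.rel_iff',
      Prod.mk.injEq, Fin.ext_iff, Prod.swap_prod_mk] at h
    have : i.1 = i'.1 ∧ j.1 = j'.1 := by omega
    exact Prod.ext (Fin.ext this.1) (Fin.ext this.2)
  have hsurj : Function.Surjective g := by
    rintro ⟨⟨e, t⟩, hnd, hmem⟩
    induction e with
    | h a b =>
      have hedge : s(a, b) ∈ (SimpleGraph.pathGraph n).edgeSet := by
        by_contra hc
        simp only [pathLab, if_neg hc] at hmem
        exact absurd hmem (Finset.notMem_empty t)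
      simp only [pathLab, if_pos hedge, Finset.mem_Icc] at hmem
      have hadj : a.1 + 1 = b.1 ∨ b.1 + 1 = a.1 :=
        SimpleGraph.pathGraph_adj.mp hedge
      have hi : min a.1 b.1 < n - 1 := by
        have := a.2; have := b.2; omega
      refine ⟨(⟨min a.1 b.1, hi⟩, ⟨t - 1, by omega⟩), ?_⟩
      simp only [hg, Subtype.ext_iff, Prod.mk.injEq]
      constructor
      · rw [Sym2.eq_iff]
        simp only [Fin.ext_iff]
        omega
      · omega
  refine ⟨RelIso.symm { toEquiv := Equiv.ofBijective g ⟨hinj, hsurj⟩, map_rel_iff' := ?_ }⟩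
  rintro ⟨i, j⟩ ⟨i', j'⟩
  simp only [Equiv.ofBijective_apply, hg]
  constructor
  · rintro ⟨hne, ⟨v, hv1, hv2⟩, hlt⟩
    dsimp only at hlt
    refine ⟨fun hc => hne (congrArg g hc), ?_⟩
    simp only [Sym2.mem_iff, Fin.ext_iff] at hv1 hv2
    have h1 : ((i : ℤ) - (i' : ℤ)) ^ 2 ≤ 1 := by
      have : (i : ℤ) - i' = -1 ∨ (i : ℤ) - i' = 0 ∨ (i : ℤ) - i' = 1 := by omega
      rcases this with h | h | h <;> rw [h] <;> norm_num
    have h2 : ((j : ℤ) - (j' : ℤ)) ^ 2 ≤ 1 := by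
      have : (j : ℤ) - j' = -1 ∨ (j : ℤ) - j' = 0 ∨ (j : ℤ) - j' = 1 := by omega
      rcases this with h | h | h <;> rw [h] <;> norm_num
    dsimp only
    omega
  · rintro ⟨hne, hle⟩
    have h1 : ((i : ℤ) - (i' : ℤ)) ^ 2 ≤ 2 := by nlinarith [sq_nonneg ((j : ℤ) - j')]
    have h2 : ((j : ℤ) - (j' : ℤ)) ^ 2 ≤ 2 := by nlinarith [sq_nonneg ((i : ℤ) - i')]
    have hi : (i : ℤ) - i' ≤ 1 ∧ (i' : ℤ) - i ≤ 1 := by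
      constructor <;> nlinarith
    have hj : (j : ℤ) - j' ≤ 1 ∧ (j' : ℤ) - j ≤ 1 := by
      constructor <;> nlinarith
    refine ⟨fun hc => hne (hinj hc), ⟨⟨max i.1 i'.1, by omega⟩, ?_, ?_⟩, by dsimp only; omega⟩
    · rw [Sym2.mem_iff]; simp only [Fin.ext_iff]; omega
    · rw [Sym2.mem_iff]; simp only [Fin.ext_iff]; omega
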